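/- There exist absolute constants 0 < c ≤ C such that for every κ > 0 and every measurable f : ℝ → ℂ one has c ∫_ℝ log(4 + ξ²/κ²) · (4κ² + ξ²)^{−1/2} |f(ξ)|² dξ ≤ ∬_{ℝ×ℝ} |f(ξ − η)|² (κ² + ξ²)^{−1/2} (κ² + η²)^{−1/2} dξ dη ≤ C ∫_ℝ log(4 + ξ²/κ²) · (4κ² + ξ²)^{−1/2} |f(ξ)|² dξ, and moreover ∫_ℝ log(4 + ξ²/κ²) · (4κ² + ξ²)^{−1/2} |f(ξ)|² dξ ≤ C κ^{−1} ∫_ℝ |f(ξ)|² dξ. -/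

import Mathlib

open MeasureTheory

namespace Stmt9Aux

open Real Set Filter Topology
open scoped ENNReal

set_option maxHeartbeats 1000000

lemma lint_inv_Ioc (a c T : ℝ) (ha : 0 < a) (hT : 0 ≤ T) (hc : 0 ≤ c) :
    ∫⁻ x in Ioc 0 T, ENNReal.ofReal (c * (a+x)⁻¹) = ENNReal.ofReal (c * Real.log ((a+T)/a)) := by
  have hco : ContinuousOn (fun x : ℝ => c * (a+x)⁻¹) (Icc 0 T) := by
    apply ContinuousOn.mul continuousOn_const
    apply ContinuousOn.inv₀ (by fun_prop)
    intro x hx; have := hx.1; positivity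
  have hint : IntegrableOn (fun x : ℝ => c * (a+x)⁻¹) (Ioc 0 T) :=
    (hco.integrableOn_Icc).mono_set Ioc_subset_Icc_self
  have hnn : 0 ≤ᵐ[volume.restrict (Ioc 0 T)] fun x : ℝ => c * (a+x)⁻¹ := by
    filter_upwards [ae_restrict_mem measurableSet_Ioc] with x hx
    have := hx.1; positivity
  rw [← ofReal_integral_eq_lintegral_ofReal hint hnn]
  congr 1
  rw [← intervalIntegral.integral_of_le hT, intervalIntegral.integral_const_mul]
  congr 1
  simp_rw [add_comm a]
  rw [intervalIntegral.integral_comp_add_right (fun x => x⁻¹) a, zero_add,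
    integral_inv_of_pos ha (by linarith), add_comm T a]

lemma lint_invsq_Ioi (a c T : ℝ) (ha : 0 < a) (hT : 0 ≤ T) (hc : 0 ≤ c) :
    ∫⁻ x in Ioi T, ENNReal.ofReal (c * ((a+x)^2)⁻¹) = ENNReal.ofReal (c * (a+T)⁻¹) := by
  have hpos : ∀ x : ℝ, x ∈ Ici T → 0 < a + x := fun x hx => by
    have : T ≤ x := hx; linarith
  have hderiv : ∀ x ∈ Ici T, HasDerivAt (fun x : ℝ => -(c * (a+x)⁻¹)) (c * ((a+x)^2)⁻¹) x := by
    intro x hx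
    have h1 : HasDerivAt (fun x : ℝ => a + x) 1 x := (hasDerivAt_id x).const_add a
    have h2 := (h1.inv (by have := hpos x hx; positivity)).const_mul c
    have h3 := h2.neg
    rw [show c * ((a+x)^2)⁻¹ = -(c * (-1 / (a + x) ^ 2)) by ring]
    exact h3
  have hnn : ∀ x ∈ Ioi T, 0 ≤ c * ((a+x)^2)⁻¹ := fun x hx => by positivity
  have htend : Tendsto (fun x : ℝ => -(c * (a+x)⁻¹)) atTop (𝓝 0) := by
    have : Tendsto (fun x : ℝ => a + x) atTop atTop := tendsto_atTop_add_const_left _ a tendsto_id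
    have := (this.inv_tendsto_atTop).const_mul c
    simpa using this.neg
  have hval := integral_Ioi_of_hasDerivAt_of_nonneg' hderiv hnn htend
  have hint := integrableOn_Ioi_deriv_of_nonneg' hderiv hnn htend
  have hnn' : 0 ≤ᵐ[volume.restrict (Ioi T)] fun x : ℝ => c * ((a+x)^2)⁻¹ :=
    ae_of_all _ fun x => by positivity
  rw [← ofReal_integral_eq_lintegral_ofReal hint hnn', hval]
  norm_num

lemma lint_abs_Icc (a c T : ℝ) (ha : 0 < a) (hT : 0 ≤ T) (hc : 0 ≤ c) :
    ∫⁻ x in Icc (-T) T, ENNReal.ofReal (c * (a+|x|)⁻¹)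
      ≤ ENNReal.ofReal (2*(c * Real.log ((a+T)/a))) := by
  have hsub : Icc (-T) T ⊆ Icc (-T) 0 ∪ Ioc 0 T := by
    intro x hx
    rcases le_or_gt x 0 with h | h
    · exact Or.inl ⟨hx.1, h⟩
    · exact Or.inr ⟨h, hx.2⟩
  refine le_trans (lintegral_mono_set hsub) ?_
  refine le_trans (lintegral_union_le _ _ _) ?_
  have hP : ∫⁻ x in Ioc 0 T, ENNReal.ofReal (c * (a+|x|)⁻¹)
      = ENNReal.ofReal (c * Real.log ((a+T)/a)) := by
    rw [← lint_inv_Ioc a c T ha hT hc]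
    apply setLIntegral_congr_fun measurableSet_Ioc
    intro x hx; dsimp only
    rw [abs_of_pos hx.1]
  have hN : ∫⁻ x in Icc (-T) 0, ENNReal.ofReal (c * (a+|x|)⁻¹)
      = ∫⁻ x in Ioc 0 T, ENNReal.ofReal (c * (a+|x|)⁻¹) := by
    have hmp : MeasurePreserving (Neg.neg : ℝ → ℝ) volume volume :=
      Measure.measurePreserving_neg volume
    have hF : Measurable fun x : ℝ => ENNReal.ofReal (c * (a+|x|)⁻¹) := by
      apply ENNReal.measurable_ofReal.comp
      exact measurable_const.mul ((measurable_const.add measurable_abs).inv)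
    have h0 := hmp.setLIntegral_comp_preimage (s := Icc (-T) 0) measurableSet_Icc hF
    have hpre : (Neg.neg : ℝ → ℝ) ⁻¹' Icc (-T) 0 = Icc 0 T := by
      ext x; simp only [Set.mem_preimage, Set.mem_Icc]
      constructor <;> (rintro ⟨h1, h2⟩; constructor <;> linarith)
    rw [hpre] at h0
    simp only [abs_neg] at h0
    rw [← h0, Measure.restrict_congr_set Ioc_ae_eq_Icc]
  have hL : 0 ≤ Real.log ((a+T)/a) := Real.log_nonneg (by rw [le_div_iff₀ ha]; linarith)
  rw [hP, hN, hP, ← ENNReal.ofReal_add (mul_nonneg hc hL) (mul_nonneg hc hL)]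
  apply ENNReal.ofReal_le_ofReal
  nlinarith

lemma sqrt_le_add' (a x : ℝ) (ha : 0 < a) : Real.sqrt (a^2+x^2) ≤ a + |x| := by
  rw [show a + |x| = Real.sqrt ((a+|x|)^2) from (Real.sqrt_sq (by positivity)).symm]
  apply Real.sqrt_le_sqrt; nlinarith [abs_nonneg x, sq_abs x]

lemma add_le_two_sqrt' (a x : ℝ) (ha : 0 < a) : a + |x| ≤ 2 * Real.sqrt (a^2+x^2) := by
  have h1 : Real.sqrt (((a+|x|)/2)^2) ≤ Real.sqrt (a^2+x^2) := by
    apply Real.sqrt_le_sqrt; nlinarith [sq_abs x, sq_nonneg (a - |x|)]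
  rw [Real.sqrt_sq (by positivity)] at h1; linarith

lemma log_le_two_log (a s : ℝ) (ha : 0 < a) (hs : 0 ≤ s) :
    Real.log (4+s^2/a^2) ≤ 2 * Real.log ((2*a+s)/a) := by
  rw [show (2:ℝ) * Real.log ((2*a+s)/a) = Real.log (((2*a+s)/a)^2) by
    rw [Real.log_pow]; push_cast; ring]
  apply Real.log_le_log (by positivity)
  rw [div_pow, show (4:ℝ) + s^2/a^2 = (4*a^2+s^2)/a^2 by field_simp]
  gcongr; nlinarith

lemma inv_mul_le_inv_mul {c d P Q : ℝ} (hP : 0 < P) (hQ : 0 < Q) (h : c * Q ≤ d * P) :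
    c * P⁻¹ ≤ d * Q⁻¹ := by
  rw [← div_eq_mul_inv, ← div_eq_mul_inv, div_le_div_iff₀ hP hQ]; linarith

lemma abs_lower (σ y : ℝ) : |y| - |σ| ≤ |σ + y| := by
  have h := abs_sub_abs_le_abs_sub y (-σ)
  simp only [sub_neg_eq_add, abs_neg] at h
  calc |y| - |σ| ≤ |y + σ| := h
    _ = |σ + y| := by rw [add_comm]

lemma abs_lower' (σ y : ℝ) : |σ| - |y| ≤ |σ + y| := by
  have h := abs_lower y σ
  rwa [add_comm] at h

lemma lowerG (a σ : ℝ) (ha : 0 < a) :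
    ENNReal.ofReal (Real.log (4+σ^2/a^2) / Real.sqrt (4*a^2+σ^2) / 8)
      ≤ ∫⁻ η : ℝ, ENNReal.ofReal ((Real.sqrt (a^2+(σ+η)^2) * Real.sqrt (a^2+η^2))⁻¹) := by
  set s := |σ| with hs_def
  have hs : 0 ≤ s := abs_nonneg σ
  have key : ∫⁻ η in Ioc 0 (a+s), ENNReal.ofReal ((2*(a+s))⁻¹ * (a+η)⁻¹)
      ≤ ∫⁻ η : ℝ, ENNReal.ofReal ((Real.sqrt (a^2+(σ+η)^2) * Real.sqrt (a^2+η^2))⁻¹) := by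
    refine le_trans ?_ (setLIntegral_le_lintegral (Ioc 0 (a+s)) _)
    apply setLIntegral_mono
    · have h : Continuous fun η : ℝ => Real.sqrt (a^2+(σ+η)^2) * Real.sqrt (a^2+η^2) := by
        fun_prop
      exact ENNReal.measurable_ofReal.comp h.measurable.inv
    · intro η hη
      apply ENNReal.ofReal_le_ofReal
      rw [← mul_inv]
      apply inv_anti₀
      · positivity
      · have h1 : Real.sqrt (a^2+(σ+η)^2) ≤ a + |σ+η| := sqrt_le_add' a _ ha
        have h2 : Real.sqrt (a^2+η^2) ≤ a + |η| := sqrt_le_add' a _ ha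
        have h3 : |σ+η| ≤ s + η := by
          calc |σ+η| ≤ |σ| + |η| := abs_add_le _ _
          _ = s + η := by rw [abs_of_pos hη.1]
        have h4 : a + |σ+η| ≤ 2*(a+s) := by
          have := hη.2; linarith
        have h5 : a + |η| = a + η := by rw [abs_of_pos hη.1]
        calc Real.sqrt (a^2+(σ+η)^2) * Real.sqrt (a^2+η^2)
            ≤ (a + |σ+η|) * (a + |η|) := by
              apply mul_le_mul h1 h2 (Real.sqrt_nonneg _) (by positivity)
          _ ≤ (2*(a+s)) * (a+η) := by
              rw [h5]; apply mul_le_mul_of_nonneg_right h4 (by have := hη.1; positivity)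
  refine le_trans ?_ key
  rw [lint_inv_Ioc a _ (a+s) ha (by linarith) (by positivity)]
  apply ENNReal.ofReal_le_ofReal
  have hX : Real.log (4+σ^2/a^2) ≤ 2 * Real.log ((2*a+s)/a) := by
    have h := log_le_two_log a s ha hs
    rwa [show s^2 = σ^2 from sq_abs σ] at h
  have hR : a + s ≤ 2 * Real.sqrt (4*a^2+σ^2) := by
    have h1 : Real.sqrt (((a+s)/2)^2) ≤ Real.sqrt (4*a^2+σ^2) := by
      apply Real.sqrt_le_sqrt
      have h2 : s^2 = σ^2 := sq_abs σ
      nlinarith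
    rw [Real.sqrt_sq (by positivity)] at h1; linarith
  have hL : 0 ≤ Real.log ((2*a+s)/a) :=
    Real.log_nonneg (by rw [le_div_iff₀ ha]; linarith)
  have hRpos : 0 < Real.sqrt (4*a^2+σ^2) := Real.sqrt_pos.mpr (by positivity)
  have hXnn : 0 ≤ Real.log (4+σ^2/a^2) := Real.log_nonneg
    (by nlinarith [div_nonneg (sq_nonneg σ) (sq_nonneg a)])
  rw [div_div, div_le_iff₀ (by positivity)]
  have hgoal : (a + (a+s)) / a = (2*a+s)/a := by ring_nf
  rw [hgoal]
  have expand : (2*(a+s))⁻¹ * Real.log ((2*a+s)/a) * (Real.sqrt (4*a^2+σ^2) * 8)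
      = 8 * Real.sqrt (4*a^2+σ^2) / (2*(a+s)) * Real.log ((2*a+s)/a) := by ring
  rw [expand]
  have h8 : (2:ℝ) ≤ 8 * Real.sqrt (4*a^2+σ^2) / (2*(a+s)) := by
    rw [le_div_iff₀ (by positivity)]; nlinarith
  nlinarith

lemma upperG (a σ : ℝ) (ha : 0 < a) :
    (∫⁻ η : ℝ, ENNReal.ofReal ((Real.sqrt (a^2+(σ+η)^2) * Real.sqrt (a^2+η^2))⁻¹))
      ≤ ENNReal.ofReal (200 * (Real.log (4+σ^2/a^2) / Real.sqrt (4*a^2+σ^2))) := by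
  set s := |σ| with hs_def
  have hs : 0 ≤ s := abs_nonneg σ
  set F : ℝ → ℝ≥0∞ := fun η => ENNReal.ofReal (4*((a+|σ+η|)*(a+|η|))⁻¹) with hF_def
  have hFm : Measurable F := by
    apply ENNReal.measurable_ofReal.comp
    have h : Continuous fun η : ℝ => (a+|σ+η|)*(a+|η|) := by fun_prop
    exact measurable_const.mul h.measurable.inv
  have hker : ∀ η : ℝ, ENNReal.ofReal ((Real.sqrt (a^2+(σ+η)^2) * Real.sqrt (a^2+η^2))⁻¹) ≤ F η := by
    intro η
    apply ENNReal.ofReal_le_ofReal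
    have h1 := add_le_two_sqrt' a (σ+η) ha
    have h2 := add_le_two_sqrt' a η ha
    have hP : (0:ℝ) < Real.sqrt (a^2+(σ+η)^2) * Real.sqrt (a^2+η^2) := by
      apply mul_pos <;> exact Real.sqrt_pos.mpr (by positivity)
    rw [show ((Real.sqrt (a^2+(σ+η)^2) * Real.sqrt (a^2+η^2))⁻¹ : ℝ)
        = 1 * (Real.sqrt (a^2+(σ+η)^2) * Real.sqrt (a^2+η^2))⁻¹ by ring]
    apply inv_mul_le_inv_mul hP (by positivity)
    nlinarith [abs_nonneg (σ+η), abs_nonneg η, Real.sqrt_nonneg (a^2+(σ+η)^2),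
      Real.sqrt_nonneg (a^2+η^2)]
  refine le_trans (lintegral_mono hker) ?_
  have hA : MeasurableSet {η : ℝ | 2*s < |η|} :=
    measurableSet_lt measurable_const measurable_abs
  rw [← lintegral_add_compl F hA]
  have tailF : ∀ x : ℝ, 2*s < x → ∀ y : ℝ, |y| = x →
      F y ≤ ENNReal.ofReal (8*((a+x)^2)⁻¹) := by
    intro x hx y hy
    have hxpos : 0 < x := lt_of_le_of_lt (by linarith) hx
    apply ENNReal.ofReal_le_ofReal
    have h1 : x - s ≤ |σ+y| := by
      have h2 := abs_lower σ y
      rw [hy] at h2; exact h2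
    have hQ : (0:ℝ) < (a+|σ+y|)*(a+|y|) := by positivity
    apply inv_mul_le_inv_mul hQ (by positivity)
    rw [hy]
    nlinarith [abs_nonneg (σ+y)]
  have htail : (∫⁻ η in {η : ℝ | 2*s < |η|}, F η)
      ≤ ENNReal.ofReal (8*(a+2*s)⁻¹) + ENNReal.ofReal (8*(a+2*s)⁻¹) := by
    have hsub : {η : ℝ | 2*s < |η|} ⊆ Ioi (2*s) ∪ Iio (-(2*s)) := by
      intro x hx
      have hx' : 2*s < |x| := hx
      rcases lt_abs.mp hx' with h | h
      · exact Or.inl h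
      · exact Or.inr (by simp only [Set.mem_Iio]; linarith)
    refine le_trans (lintegral_mono_set hsub) (le_trans (lintegral_union_le _ _ _) ?_)
    have hm8 : Measurable fun x : ℝ => ENNReal.ofReal (8*((a+x)^2)⁻¹) := by
      apply ENNReal.measurable_ofReal.comp
      have h : Continuous fun x : ℝ => (a+x)^2 := by fun_prop
      exact measurable_const.mul h.measurable.inv
    have hIoi : (∫⁻ η in Ioi (2*s), F η) ≤ ENNReal.ofReal (8*(a+2*s)⁻¹) := by
      rw [← lint_invsq_Ioi a 8 (2*s) ha (by linarith) (by norm_num)]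
      apply setLIntegral_mono hm8
      intro x hx
      exact tailF x hx x (abs_of_pos (lt_of_le_of_lt (by linarith) hx))
    have hIio : (∫⁻ η in Iio (-(2*s)), F η) ≤ ENNReal.ofReal (8*(a+2*s)⁻¹) := by
      have hmp : MeasurePreserving (Neg.neg : ℝ → ℝ) volume volume :=
        Measure.measurePreserving_neg volume
      have hpre : (Neg.neg : ℝ → ℝ) ⁻¹' Iio (-(2*s)) = Ioi (2*s) := by
        ext x; simp only [Set.mem_preimage, Set.mem_Iio, Set.mem_Ioi]
        constructor <;> intro h <;> linarith
      have heq := hmp.setLIntegral_comp_preimage (s := Iio (-(2*s))) measurableSet_Iio hFm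
      rw [hpre] at heq
      rw [← heq, ← lint_invsq_Ioi a 8 (2*s) ha (by linarith) (by norm_num)]
      apply setLIntegral_mono hm8
      intro x hx
      exact tailF x hx (-x) (by rw [abs_neg]; exact abs_of_pos (lt_of_le_of_lt (by linarith) hx))
    exact add_le_add hIoi hIio
  have hcen : (∫⁻ η in {η : ℝ | 2*s < |η|}ᶜ, F η)
      ≤ ENNReal.ofReal (2*(8/(a+s) * Real.log ((a+2*s)/a)))
        + ENNReal.ofReal (2*(8/(a+s) * Real.log ((a+3*s)/a))) := by
    have hsplit : {η : ℝ | 2*s < |η|}ᶜ ⊆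
        ({η : ℝ | 2*s < |η|}ᶜ ∩ {η : ℝ | |η| ≤ |σ+η|}) ∪
        ({η : ℝ | 2*s < |η|}ᶜ ∩ {η : ℝ | |η| ≤ |σ+η|}ᶜ) := by
      intro x hx
      rcases le_or_gt |x| |σ+x| with h | h
      · exact Or.inl ⟨hx, h⟩
      · exact Or.inr ⟨hx, not_le.mpr h⟩
    refine le_trans (lintegral_mono_set hsplit) (le_trans (lintegral_union_le _ _ _) ?_)
    have hsubIcc : {η : ℝ | 2*s < |η|}ᶜ ⊆ Icc (-(2*s)) (2*s) := by
      intro x hx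
      have habs : |x| ≤ 2*s := not_lt.mp hx
      exact ⟨(abs_le.mp habs).1, (abs_le.mp habs).2⟩
    apply add_le_add
    · calc ∫⁻ η in {η : ℝ | 2*s < |η|}ᶜ ∩ {η : ℝ | |η| ≤ |σ+η|}, F η
          ≤ ∫⁻ η in {η : ℝ | 2*s < |η|}ᶜ ∩ {η : ℝ | |η| ≤ |σ+η|},
              ENNReal.ofReal (8/(a+s) * (a+|η|)⁻¹) := by
            apply setLIntegral_mono
            · apply ENNReal.measurable_ofReal.comp
              exact measurable_const.mul ((measurable_const.add measurable_abs).inv)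
            · intro x hx
              apply ENNReal.ofReal_le_ofReal
              have hx2 : |x| ≤ |σ+x| := hx.2
              have hsl : s/2 ≤ |σ+x| := by
                have h2 := abs_lower' σ x
                nlinarith [h2]
              apply inv_mul_le_inv_mul (by positivity) (by positivity)
              have h4 : 4 ≤ 8/(a+s) * (a+|σ+x|) := by
                have hkey : 8/(a+s) * ((a+s)/2) = 4 := by field_simp; norm_num
                have hmono : 8/(a+s) * ((a+s)/2) ≤ 8/(a+s) * (a+|σ+x|) := by
                  apply mul_le_mul_of_nonneg_left _ (by positivity)
                  linarith
                linarith
              nlinarith [abs_nonneg x, mul_le_mul_of_nonneg_right h4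
                (show (0:ℝ) ≤ a+|x| by positivity)]
        _ ≤ ∫⁻ η in Icc (-(2*s)) (2*s), ENNReal.ofReal (8/(a+s) * (a+|η|)⁻¹) :=
            lintegral_mono_set (fun x hx => hsubIcc hx.1)
        _ ≤ ENNReal.ofReal (2*(8/(a+s) * Real.log ((a+2*s)/a))) :=
            lint_abs_Icc a _ (2*s) ha (by linarith) (by positivity)
    · have hmf : Measurable fun u : ℝ => ENNReal.ofReal (8/(a+s) * (a+|u|)⁻¹) := by
        apply ENNReal.measurable_ofReal.comp
        exact measurable_const.mul ((measurable_const.add measurable_abs).inv)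
      calc ∫⁻ η in {η : ℝ | 2*s < |η|}ᶜ ∩ {η : ℝ | |η| ≤ |σ+η|}ᶜ, F η
          ≤ ∫⁻ η in {η : ℝ | 2*s < |η|}ᶜ ∩ {η : ℝ | |η| ≤ |σ+η|}ᶜ,
              ENNReal.ofReal (8/(a+s) * (a+|σ+η|)⁻¹) := by
            apply setLIntegral_mono
            · apply ENNReal.measurable_ofReal.comp
              have h : Continuous fun η : ℝ => a+|σ+η| := by fun_prop
              exact measurable_const.mul h.measurable.inv
            · intro x hx
              apply ENNReal.ofReal_le_ofReal
              have hx2 : |σ+x| < |x| := not_le.mp hx.2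
              have hsl : s/2 ≤ |x| := by
                have h2 := abs_lower' σ x
                nlinarith [h2]
              apply inv_mul_le_inv_mul (by positivity) (by positivity)
              have h4 : 4 ≤ 8/(a+s) * (a+|x|) := by
                have hkey : 8/(a+s) * ((a+s)/2) = 4 := by field_simp; norm_num
                have hmono : 8/(a+s) * ((a+s)/2) ≤ 8/(a+s) * (a+|x|) := by
                  apply mul_le_mul_of_nonneg_left _ (by positivity)
                  linarith
                linarith
              nlinarith [abs_nonneg (σ+x), mul_le_mul_of_nonneg_right h4
                (show (0:ℝ) ≤ a+|σ+x| by positivity)]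
        _ ≤ ∫⁻ η in Icc (-(2*s)) (2*s), ENNReal.ofReal (8/(a+s) * (a+|σ+η|)⁻¹) :=
            lintegral_mono_set (fun x hx => hsubIcc hx.1)
        _ = ∫⁻ u in Icc (σ+ -(2*s)) (σ+2*s), ENNReal.ofReal (8/(a+s) * (a+|u|)⁻¹) := by
            have hmp : MeasurePreserving (fun x : ℝ => σ + x) volume volume :=
              measurePreserving_add_left volume σ
            have heq := hmp.setLIntegral_comp_preimage
              (s := Icc (σ + -(2*s)) (σ+2*s)) measurableSet_Icc hmf
            have hpre : (fun x : ℝ => σ + x) ⁻¹' Icc (σ + -(2*s)) (σ+2*s)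
                = Icc (-(2*s)) (2*s) := by
              ext x; simp only [Set.mem_preimage, Set.mem_Icc]
              constructor <;> (rintro ⟨h1, h2⟩; constructor <;> linarith)
            rw [hpre] at heq
            exact heq
        _ ≤ ∫⁻ u in Icc (-(3*s)) (3*s), ENNReal.ofReal (8/(a+s) * (a+|u|)⁻¹) := by
            apply lintegral_mono_set
            apply Icc_subset_Icc
            · have := neg_abs_le σ; linarith
            · have := le_abs_self σ; linarith
        _ ≤ ENNReal.ofReal (2*(8/(a+s) * Real.log ((a+3*s)/a))) :=
            lint_abs_Icc a _ (3*s) ha (by linarith) (by positivity)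
  refine le_trans (add_le_add htail hcen) ?_
  have hL2pos : (0:ℝ) < (2*a+s)/a := by positivity
  set L := Real.log ((2*a+s)/a) with hL_def
  have hlog2 : Real.log 2 ≤ L := by
    apply Real.log_le_log (by norm_num)
    rw [le_div_iff₀ ha]; linarith
  have hL23 : (2/3 : ℝ) ≤ L := le_trans (by nlinarith [Real.log_two_gt_d9]) hlog2
  have hLnn : (0:ℝ) ≤ L := by linarith
  have hlogA : Real.log ((a+2*s)/a) ≤ 2*L := by
    rw [show (2:ℝ)*L = Real.log (((2*a+s)/a)^2) by rw [Real.log_pow]; push_cast; ring]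
    apply Real.log_le_log (by positivity)
    rw [div_pow, div_le_div_iff₀ (by positivity) (by positivity)]
    nlinarith [mul_pos (mul_pos ha ha) ha, mul_nonneg (mul_nonneg ha.le ha.le) hs,
      mul_nonneg (mul_nonneg ha.le hs) hs]
  have hlogB : Real.log ((a+3*s)/a) ≤ 2*L := by
    rw [show (2:ℝ)*L = Real.log (((2*a+s)/a)^2) by rw [Real.log_pow]; push_cast; ring]
    apply Real.log_le_log (by positivity)
    rw [div_pow, div_le_div_iff₀ (by positivity) (by positivity)]
    nlinarith [mul_pos (mul_pos ha ha) ha, mul_nonneg (mul_nonneg ha.le ha.le) hs,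
      mul_nonneg (mul_nonneg ha.le hs) hs]
  have hσ2 : σ^2 = s^2 := (sq_abs σ).symm
  have hLX : L ≤ Real.log (4+σ^2/a^2) := by
    apply Real.log_le_log hL2pos
    rw [show (4:ℝ)+σ^2/a^2 = (4*a^2+σ^2)/a^2 by field_simp,
      show (2*a+s)/a = (2*a+s)*a/a^2 by field_simp,
      div_le_div_iff₀ (by positivity) (by positivity)]
    nlinarith [mul_pos (mul_pos ha ha) ha, mul_nonneg (mul_nonneg ha.le ha.le) hs,
      mul_nonneg (mul_nonneg ha.le hs) hs]
  have hl2nn : 0 ≤ Real.log ((a+2*s)/a) :=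
    Real.log_nonneg ((le_div_iff₀ ha).mpr (by linarith))
  have hl3nn : 0 ≤ Real.log ((a+3*s)/a) :=
    Real.log_nonneg ((le_div_iff₀ ha).mpr (by linarith))
  rw [← ENNReal.ofReal_add (by positivity) (by positivity),
    ← ENNReal.ofReal_add (by positivity) (by positivity),
    ← ENNReal.ofReal_add (by positivity) (by positivity)]
  apply ENNReal.ofReal_le_ofReal
  set X := Real.log (4+σ^2/a^2) with hX_def
  set R := Real.sqrt (4*a^2+σ^2) with hR_def
  have hRpos : 0 < R := Real.sqrt_pos.mpr (by positivity)
  have hXnn : 0 ≤ X := le_trans hLnn hLX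
  have hRle : R ≤ 2*(a+s) := by
    rw [hR_def, show 2*(a+s) = Real.sqrt ((2*(a+s))^2) from (Real.sqrt_sq (by positivity)).symm]
    apply Real.sqrt_le_sqrt
    nlinarith [mul_nonneg ha.le hs]
  have hinv1 : (8:ℝ)*(a+2*s)⁻¹ ≤ 12*L/(a+s) := by
    rw [← div_eq_mul_inv, div_le_div_iff₀ (by positivity) (by positivity)]
    have h12 : (8:ℝ) ≤ 12*L := by linarith
    linarith [mul_le_mul_of_nonneg_right h12 (show (0:ℝ) ≤ a+2*s by linarith),
      mul_nonneg hLnn hs]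
  have h2' : 2*(8/(a+s)*Real.log ((a+2*s)/a)) ≤ 32*L/(a+s) := by
    rw [show 2*(8/(a+s)*Real.log ((a+2*s)/a)) = 16*Real.log ((a+2*s)/a)/(a+s) by ring,
      div_le_div_iff₀ (by positivity) (by positivity)]
    linarith [mul_le_mul_of_nonneg_right hlogA (show (0:ℝ) ≤ a+s by linarith)]
  have h3' : 2*(8/(a+s)*Real.log ((a+3*s)/a)) ≤ 32*L/(a+s) := by
    rw [show 2*(8/(a+s)*Real.log ((a+3*s)/a)) = 16*Real.log ((a+3*s)/a)/(a+s) by ring,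
      div_le_div_iff₀ (by positivity) (by positivity)]
    linarith [mul_le_mul_of_nonneg_right hlogB (show (0:ℝ) ≤ a+s by linarith)]
  have hfin : 88*L/(a+s) ≤ 200*(X/R) := by
    rw [show 200*(X/R) = 200*X/R by ring, div_le_div_iff₀ (by positivity) hRpos]
    nlinarith [mul_le_mul hLX hRle hRpos.le hXnn,
      mul_nonneg hXnn (show (0:ℝ) ≤ a+s by linarith)]
  have hsplit88 : 12*L/(a+s)+12*L/(a+s)+(32*L/(a+s)+32*L/(a+s)) = 88*L/(a+s) := by ring
  linarith

lemma H_le (a ξ : ℝ) (ha : 0 < a) :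
    Real.log (4+ξ^2/a^2) / Real.sqrt (4*a^2+ξ^2) ≤ 2/a := by
  have hu1 : (1:ℝ) ≤ 4+ξ^2/a^2 := by
    linarith [div_nonneg (sq_nonneg ξ) (sq_nonneg a)]
  have hlog : Real.log (4+ξ^2/a^2) ≤ 2 * Real.sqrt (4+ξ^2/a^2) := by
    have h := Real.log_le_sub_one_of_pos (x := Real.sqrt (4+ξ^2/a^2)) (by positivity)
    rw [Real.log_sqrt (by linarith)] at h
    nlinarith [Real.sqrt_nonneg (4+ξ^2/a^2)]
  have hsq : Real.sqrt (4*a^2+ξ^2) = a * Real.sqrt (4+ξ^2/a^2) := by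
    rw [show 4*a^2+ξ^2 = a^2*(4+ξ^2/a^2) by field_simp,
      Real.sqrt_mul (sq_nonneg a), Real.sqrt_sq ha.le]
  have hspos : 0 < Real.sqrt (4+ξ^2/a^2) := Real.sqrt_pos.mpr (by linarith)
  rw [hsq]
  calc Real.log (4+ξ^2/a^2) / (a * Real.sqrt (4+ξ^2/a^2))
      ≤ (2 * Real.sqrt (4+ξ^2/a^2)) / (a * Real.sqrt (4+ξ^2/a^2)) := by gcongr
    _ = 2/a := by
      rw [div_eq_div_iff (by positivity) (by positivity)]; ring

lemma double_eq (κ : ℝ) (f : ℝ → ℂ) (hf : Measurable f) :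
    (∫⁻ p : ℝ × ℝ, ENNReal.ofReal
        (‖f (p.1 - p.2)‖ ^ 2 / (Real.sqrt (κ^2+p.1^2) * Real.sqrt (κ^2+p.2^2))))
  = ∫⁻ σ : ℝ, ENNReal.ofReal (‖f σ‖^2) *
      ∫⁻ η : ℝ, ENNReal.ofReal ((Real.sqrt (κ^2+(σ+η)^2) * Real.sqrt (κ^2+η^2))⁻¹) := by
  have hcont : Continuous fun p : ℝ × ℝ => Real.sqrt (κ^2+p.1^2) * Real.sqrt (κ^2+p.2^2) := by
    fun_prop
  have hm : Measurable fun p : ℝ × ℝ => ENNReal.ofReal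
      (‖f (p.1 - p.2)‖ ^ 2 / (Real.sqrt (κ^2+p.1^2) * Real.sqrt (κ^2+p.2^2))) := by
    apply ENNReal.measurable_ofReal.comp
    exact (((hf.comp (measurable_fst.sub measurable_snd)).norm.pow measurable_const).div
      hcont.measurable)
  have hm2 : Measurable fun p : ℝ × ℝ => ENNReal.ofReal
      (‖f p.2‖ ^ 2 / (Real.sqrt (κ^2+(p.2+p.1)^2) * Real.sqrt (κ^2+p.1^2))) := by
    apply ENNReal.measurable_ofReal.comp
    apply ((hf.comp measurable_snd).norm.pow measurable_const).div
    have h : Continuous fun p : ℝ × ℝ => Real.sqrt (κ^2+(p.2+p.1)^2) * Real.sqrt (κ^2+p.1^2) := by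
      fun_prop
    exact h.measurable
  rw [Measure.volume_eq_prod, lintegral_prod_symm _ hm.aemeasurable]
  have step1 : ∀ η : ℝ, (∫⁻ ξ : ℝ, ENNReal.ofReal
      (‖f (ξ - η)‖ ^ 2 / (Real.sqrt (κ^2+ξ^2) * Real.sqrt (κ^2+η^2))))
      = ∫⁻ σ : ℝ, ENNReal.ofReal
      (‖f σ‖ ^ 2 / (Real.sqrt (κ^2+(σ+η)^2) * Real.sqrt (κ^2+η^2))) := by
    intro η
    rw [← lintegral_add_right_eq_self (fun ξ => ENNReal.ofReal
      (‖f (ξ - η)‖ ^ 2 / (Real.sqrt (κ^2+ξ^2) * Real.sqrt (κ^2+η^2)))) η]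
    simp only [add_sub_cancel_right]
  simp_rw [step1]
  rw [lintegral_lintegral_swap hm2.aemeasurable]
  congr 1; ext σ
  simp_rw [div_eq_mul_inv, ENNReal.ofReal_mul (by positivity : (0:ℝ) ≤ ‖f σ‖^2)]
  rw [lintegral_const_mul]
  apply ENNReal.measurable_ofReal.comp
  have h : Continuous fun η : ℝ => Real.sqrt (κ^2+(σ+η)^2) * Real.sqrt (κ^2+η^2) := by
    fun_prop
  exact h.measurable.inv

end Stmt9Aux

open Stmt9Aux in
/-- **Hilbert–Schmidt bound (kernel form).** There are absolute constants
`0 < c ≤ C` so that for all `κ > 0` and measurable `f : ℝ → ℂ`,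
`c ∫ log(4+ξ²/κ²)(4κ²+ξ²)^{-1/2}|f(ξ)|² dξ
  ≤ ∬ |f(ξ-η)|² (κ²+ξ²)^{-1/2}(κ²+η²)^{-1/2} dξ dη
  ≤ C ∫ log(4+ξ²/κ²)(4κ²+ξ²)^{-1/2}|f(ξ)|² dξ`,
and the latter is `≤ C κ^{-1} ∫ |f|²`.  (Integrals in the extended reals.) -/
theorem stmt_9 :
    ∃ c C : ℝ, 0 < c ∧ c ≤ C ∧
      ∀ κ : ℝ, 0 < κ → ∀ f : ℝ → ℂ, Measurable f →
        (ENNReal.ofReal c *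
            (∫⁻ ξ : ℝ, ENNReal.ofReal
              (Real.log (4 + ξ ^ 2 / κ ^ 2) / Real.sqrt (4 * κ ^ 2 + ξ ^ 2) * ‖f ξ‖ ^ 2))
          ≤ ∫⁻ p : ℝ × ℝ, ENNReal.ofReal
              (‖f (p.1 - p.2)‖ ^ 2
                / (Real.sqrt (κ ^ 2 + p.1 ^ 2) * Real.sqrt (κ ^ 2 + p.2 ^ 2)))) ∧
        ((∫⁻ p : ℝ × ℝ, ENNReal.ofReal
              (‖f (p.1 - p.2)‖ ^ 2
                / (Real.sqrt (κ ^ 2 + p.1 ^ 2) * Real.sqrt (κ ^ 2 + p.2 ^ 2))))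
          ≤ ENNReal.ofReal C *
            (∫⁻ ξ : ℝ, ENNReal.ofReal
              (Real.log (4 + ξ ^ 2 / κ ^ 2) / Real.sqrt (4 * κ ^ 2 + ξ ^ 2) * ‖f ξ‖ ^ 2))) ∧
        ((∫⁻ ξ : ℝ, ENNReal.ofReal
              (Real.log (4 + ξ ^ 2 / κ ^ 2) / Real.sqrt (4 * κ ^ 2 + ξ ^ 2) * ‖f ξ‖ ^ 2))
          ≤ ENNReal.ofReal (C / κ) * ∫⁻ ξ : ℝ, ENNReal.ofReal (‖f ξ‖ ^ 2)) := by
  refine ⟨1/8, 200, by norm_num, by norm_num, ?_⟩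
  intro κ hκ f hf
  have hdouble := double_eq κ f hf
  refine ⟨?_, ?_, ?_⟩
  · rw [hdouble]
    have hpt : ∀ σ : ℝ, ENNReal.ofReal ((1:ℝ)/8) * ENNReal.ofReal
        (Real.log (4 + σ ^ 2 / κ ^ 2) / Real.sqrt (4 * κ ^ 2 + σ ^ 2) * ‖f σ‖ ^ 2)
        ≤ ENNReal.ofReal (‖f σ‖^2) *
          ∫⁻ η : ℝ, ENNReal.ofReal ((Real.sqrt (κ^2+(σ+η)^2) * Real.sqrt (κ^2+η^2))⁻¹) := by
      intro σ
      calc ENNReal.ofReal ((1:ℝ)/8) * ENNReal.ofReal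
            (Real.log (4 + σ ^ 2 / κ ^ 2) / Real.sqrt (4 * κ ^ 2 + σ ^ 2) * ‖f σ‖ ^ 2)
          = ENNReal.ofReal (‖f σ‖^2) * ENNReal.ofReal
            (Real.log (4 + σ ^ 2 / κ ^ 2) / Real.sqrt (4 * κ ^ 2 + σ ^ 2) / 8) := by
            rw [← ENNReal.ofReal_mul (by norm_num), ← ENNReal.ofReal_mul (by positivity)]
            congr 1; ring
        _ ≤ _ := by
            exact mul_le_mul_right (lowerG κ σ hκ) _
    calc ENNReal.ofReal ((1:ℝ)/8) * ∫⁻ σ : ℝ, ENNReal.ofReal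
          (Real.log (4 + σ ^ 2 / κ ^ 2) / Real.sqrt (4 * κ ^ 2 + σ ^ 2) * ‖f σ‖ ^ 2)
        = ∫⁻ σ : ℝ, ENNReal.ofReal ((1:ℝ)/8) * ENNReal.ofReal
          (Real.log (4 + σ ^ 2 / κ ^ 2) / Real.sqrt (4 * κ ^ 2 + σ ^ 2) * ‖f σ‖ ^ 2) := by
          rw [lintegral_const_mul' _ _ ENNReal.ofReal_ne_top]
      _ ≤ _ := lintegral_mono hpt
  · rw [hdouble]
    have hpt : ∀ σ : ℝ, ENNReal.ofReal (‖f σ‖^2) *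
          (∫⁻ η : ℝ, ENNReal.ofReal ((Real.sqrt (κ^2+(σ+η)^2) * Real.sqrt (κ^2+η^2))⁻¹))
        ≤ ENNReal.ofReal (200:ℝ) * ENNReal.ofReal
          (Real.log (4 + σ ^ 2 / κ ^ 2) / Real.sqrt (4 * κ ^ 2 + σ ^ 2) * ‖f σ‖ ^ 2) := by
      intro σ
      calc ENNReal.ofReal (‖f σ‖^2) *
            (∫⁻ η : ℝ, ENNReal.ofReal ((Real.sqrt (κ^2+(σ+η)^2) * Real.sqrt (κ^2+η^2))⁻¹))
          ≤ ENNReal.ofReal (‖f σ‖^2) * ENNReal.ofReal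
            (200 * (Real.log (4+σ^2/κ^2) / Real.sqrt (4*κ^2+σ^2))) :=
            mul_le_mul_right (upperG κ σ hκ) _
        _ = ENNReal.ofReal (200:ℝ) * ENNReal.ofReal
            (Real.log (4 + σ ^ 2 / κ ^ 2) / Real.sqrt (4 * κ ^ 2 + σ ^ 2) * ‖f σ‖ ^ 2) := by
            rw [← ENNReal.ofReal_mul (by positivity), ← ENNReal.ofReal_mul (by norm_num)]
            congr 1; ring
    calc (∫⁻ σ : ℝ, ENNReal.ofReal (‖f σ‖^2) *
          ∫⁻ η : ℝ, ENNReal.ofReal ((Real.sqrt (κ^2+(σ+η)^2) * Real.sqrt (κ^2+η^2))⁻¹))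
        ≤ ∫⁻ σ : ℝ, ENNReal.ofReal (200:ℝ) * ENNReal.ofReal
          (Real.log (4 + σ ^ 2 / κ ^ 2) / Real.sqrt (4 * κ ^ 2 + σ ^ 2) * ‖f σ‖ ^ 2) :=
          lintegral_mono hpt
      _ = _ := by rw [lintegral_const_mul' _ _ ENNReal.ofReal_ne_top]
  · have hpt : ∀ ξ : ℝ, ENNReal.ofReal
        (Real.log (4 + ξ ^ 2 / κ ^ 2) / Real.sqrt (4 * κ ^ 2 + ξ ^ 2) * ‖f ξ‖ ^ 2)
        ≤ ENNReal.ofReal ((200:ℝ)/κ) * ENNReal.ofReal (‖f ξ‖ ^ 2) := by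
      intro ξ
      rw [← ENNReal.ofReal_mul (by positivity)]
      apply ENNReal.ofReal_le_ofReal
      have h1 := H_le κ ξ hκ
      have hnn : (0:ℝ) ≤ ‖f ξ‖^2 := by positivity
      calc Real.log (4 + ξ ^ 2 / κ ^ 2) / Real.sqrt (4 * κ ^ 2 + ξ ^ 2) * ‖f ξ‖ ^ 2
          ≤ (2/κ) * ‖f ξ‖^2 := mul_le_mul_of_nonneg_right h1 hnn
        _ ≤ (200/κ) * ‖f ξ‖^2 := by
            apply mul_le_mul_of_nonneg_right _ hnn
            gcongr <;> norm_num
    calc (∫⁻ ξ : ℝ, ENNReal.ofReal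
          (Real.log (4 + ξ ^ 2 / κ ^ 2) / Real.sqrt (4 * κ ^ 2 + ξ ^ 2) * ‖f ξ‖ ^ 2))
        ≤ ∫⁻ ξ : ℝ, ENNReal.ofReal ((200:ℝ)/κ) * ENNReal.ofReal (‖f ξ‖ ^ 2) :=
          lintegral_mono hpt
      _ = _ := by rw [lintegral_const_mul' _ _ ENNReal.ofReal_ne_top]
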